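/- (Lemma 1, sequential form.) Let d ≥ 1 and for each n ∈ ℕ let S_n, T_n : ℝ^d → ℝ with S_n convex. Suppose δ_n := sup_{θ ∈ ℝ^d} |S_n(θ) − T_n(θ)| is finite for each n and δ_n → 0. Let θ̂_n be a minimizer of S_n and θ̃_n a minimizer of T_n over ℝ^d, and suppose the minima of S_n are uniformly well separated: for every ε > 0 there exists η > 0 such that inf{ S_n(θ) : ‖θ − θ̂_n‖ = ε } − S_n(θ̂_n) ≥ η for all n. Then ‖θ̃_n − θ̂_n‖ → 0 as n → ∞. -/

import Mathlib

open Filter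

/-- Lemma 1, sequential form: if `S_n` are convex, `δ_n = sup_θ |S_n θ - T_n θ|` is finite
for each `n` with `δ_n → 0`, `θ̂_n` minimizes `S_n`, `θ̃_n` minimizes `T_n`, and the minima
of `S_n` are uniformly well separated, then `‖θ̃_n - θ̂_n‖ → 0`. -/
theorem minimizers_asymptotically_equivalent
    (d : ℕ) (hd : 1 ≤ d)
    (S T : ℕ → EuclideanSpace ℝ (Fin d) → ℝ)
    (hconv : ∀ n, ConvexOn ℝ Set.univ (S n))
    (hbdd : ∀ n, BddAbove (Set.range fun θ => |S n θ - T n θ|))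
    (δ : ℕ → ℝ) (hδ : ∀ n, δ n = ⨆ θ, |S n θ - T n θ|)
    (hδ0 : Tendsto δ atTop (nhds 0))
    (θhat θtil : ℕ → EuclideanSpace ℝ (Fin d))
    (hθhat : ∀ n θ, S n (θhat n) ≤ S n θ)
    (hθtil : ∀ n θ, T n (θtil n) ≤ T n θ)
    (hsep : ∀ ε : ℝ, 0 < ε → ∃ η : ℝ, 0 < η ∧ ∀ n,
      η ≤ sInf (S n '' {θ | ‖θ - θhat n‖ = ε}) - S n (θhat n)) :
    Tendsto (fun n => ‖θtil n - θhat n‖) atTop (nhds 0) := by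
  have hδle : ∀ n θ, |S n θ - T n θ| ≤ δ n := by
    intro n θ
    rw [hδ n]
    exact le_ciSup (hbdd n) θ
  rw [NormedAddCommGroup.tendsto_nhds_zero]
  intro ε hε
  obtain ⟨η, hη, hsepη⟩ := hsep ε hε
  have hδev : ∀ᶠ n in atTop, |δ n| < η / 2 := by
    have := (NormedAddCommGroup.tendsto_nhds_zero.mp hδ0) (η / 2) (by linarith)
    simpa using this
  filter_upwards [hδev] with n hn
  rw [Real.norm_eq_abs, abs_of_nonneg (norm_nonneg _)]
  by_contra hcon
  push_neg at hcon
  set r := ‖θtil n - θhat n‖ with hr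
  have hrpos : 0 < r := lt_of_lt_of_le hε hcon
  set t : ℝ := ε / r with ht
  have ht0 : 0 < t := div_pos hε hrpos
  have ht1 : t ≤ 1 := (div_le_one hrpos).mpr hcon
  set θ' : EuclideanSpace ℝ (Fin d) := θhat n + t • (θtil n - θhat n) with hθ'
  have hsphere : ‖θ' - θhat n‖ = ε := by
    rw [hθ']
    simp only [add_sub_cancel_left, norm_smul, Real.norm_eq_abs, abs_of_pos ht0]
    rw [ht]
    field_simp
    exact hr.symm
  -- θ' is a convex combination
  have hcomb : θ' = (1 - t) • θhat n + t • θtil n := by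
    rw [hθ']
    module
  have hSθ' : S n θ' ≤ (1 - t) * S n (θhat n) + t * S n (θtil n) := by
    rw [hcomb]
    exact (hconv n).2 (Set.mem_univ _) (Set.mem_univ _) (by linarith) (le_of_lt ht0)
      (by ring)
  -- sInf bound
  have hbelow : BddBelow (S n '' {θ | ‖θ - θhat n‖ = ε}) := by
    refine ⟨S n (θhat n), ?_⟩
    rintro x ⟨θ, -, rfl⟩
    exact hθhat n θ
  have hmem : S n θ' ∈ S n '' {θ | ‖θ - θhat n‖ = ε} := ⟨θ', hsphere, rfl⟩
  have hInf : sInf (S n '' {θ | ‖θ - θhat n‖ = ε}) ≤ S n θ' := csInf_le hbelow hmem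
  have h1 : S n (θhat n) + η ≤ S n θ' := by
    have := hsepη n
    linarith
  -- so t * S θtil ≥ t * S θhat + η
  have h2 : t * S n (θhat n) + η ≤ t * S n (θtil n) := by nlinarith
  have h3 : S n (θhat n) + η ≤ S n (θtil n) := by
    have hηt : η ≤ η / t * t := by
      rw [div_mul_cancel₀ _ (ne_of_gt ht0)]
    nlinarith [mul_le_mul_of_nonneg_left (le_of_lt hη) (le_of_lt ht0)]
  -- δ chain
  have d1 : S n (θtil n) - T n (θtil n) ≤ δ n := le_trans (le_abs_self _) (hδle n _)
  have d2 : T n (θhat n) - S n (θhat n) ≤ δ n := by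
    have := hδle n (θhat n)
    have := neg_abs_le (S n (θhat n) - T n (θhat n))
    linarith
  have d3 : T n (θtil n) ≤ T n (θhat n) := hθtil n _
  have hδn : δ n < η / 2 := lt_of_le_of_lt (le_abs_self _) hn
  linarith
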